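/- Let μ be a bimultiplication law covering ξ with hindrance h, and let μ' = μ + ε∘l for a linear map l: A → K. Then h' := h + Δ^μ(l) + l·l is a hindrance for μ' (ε∘h' = R^{μ'}), and the obstruction cocycles coincide: f(μ', h') = f(μ, h). -/
import Mathlib


/-- A bimultiplication of a (possibly non-unital) associative `F`-algebra `K`. -/
def IsBimul (F : Type*) {K : Type*} [Field F] [NonUnitalRing K] [Module F K]
    [SMulCommClass F K K] [IsScalarTower F K K] (u v : K →ₗ[F] K) : Prop :=
  (∀ k1 k2 : K, k1 * u k2 = v k1 * k2) ∧
  (∀ k1 k2 : K, u (k1 * k2) = u k1 * k2) ∧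
  (∀ k1 k2 : K, v (k1 * k2) = k1 * v k2)

/-- Let `μ = (u,v)` be a regular bimultiplication law with hindrance `h`
(`ε∘h = R^μ`), and let `μ' = μ + ε∘l` for a linear `l : A → K`.  Then
`h' := h + Δ^μ(l) + l·l` is a hindrance for `μ'` (`ε∘h' = R^{μ'}`), and the
obstruction cocycles coincide: `f(μ', h') = f(μ, h)`. -/
theorem modified_hindrance_same_cocycle
    (F A K : Type*) [Field F]
    [NonUnitalRing A] [Module F A] [SMulCommClass F A A] [IsScalarTower F A A]
    [NonUnitalRing K] [Module F K] [SMulCommClass F K K] [IsScalarTower F K K]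
    (u v : A →ₗ[F] (K →ₗ[F] K))
    (hbim : ∀ a : A, IsBimul F (u a) (v a))
    (hreg : ∀ a1 a2 : A, u a1 ∘ₗ v a2 = v a2 ∘ₗ u a1)
    (h : A →ₗ[F] A →ₗ[F] K)
    (hcurv : ∀ a1 a2 : A,
      u a1 ∘ₗ u a2 - u (a1 * a2) = LinearMap.mulLeft F (h a1 a2) ∧
      v a2 ∘ₗ v a1 - v (a1 * a2) = LinearMap.mulRight F (h a1 a2))
    (l : A →ₗ[F] K) :
    let u' : A → K →ₗ[F] K := fun a => u a + LinearMap.mulLeft F (l a)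
    let v' : A → K →ₗ[F] K := fun a => v a + LinearMap.mulRight F (l a)
    let h' : A → A → K := fun a1 a2 =>
      h a1 a2 + (u a1 (l a2) - l (a1 * a2) + v a2 (l a1)) + l a1 * l a2
    -- h' is a hindrance for μ' = μ + ε∘l
    (∀ a1 a2 : A,
      u' a1 ∘ₗ u' a2 - u' (a1 * a2) = LinearMap.mulLeft F (h' a1 a2) ∧
      v' a2 ∘ₗ v' a1 - v' (a1 * a2) = LinearMap.mulRight F (h' a1 a2)) ∧
    -- f(μ', h') = f(μ, h)
    (∀ a1 a2 a3 : A,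
      u' a1 (h' a2 a3) - h' (a1 * a2) a3 + h' a1 (a2 * a3) - v' a3 (h' a1 a2) =
      u a1 (h a2 a3) - h (a1 * a2) a3 + h a1 (a2 * a3) - v a3 (h a1 a2)) := by
  intro u' v' h'
  -- pointwise facts
  have hmul1 : ∀ (a : A) (k1 k2 : K), k1 * u a k2 = v a k1 * k2 := fun a => (hbim a).1
  have hmul2 : ∀ (a : A) (k1 k2 : K), u a (k1 * k2) = u a k1 * k2 := fun a => (hbim a).2.1
  have hmul3 : ∀ (a : A) (k1 k2 : K), v a (k1 * k2) = k1 * v a k2 := fun a => (hbim a).2.2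
  have hreg' : ∀ (a1 a2 : A) (k : K), u a1 (v a2 k) = v a2 (u a1 k) := by
    intro a1 a2 k
    exact congrFun (congrArg DFunLike.coe (hreg a1 a2)) k
  have hu : ∀ (a1 a2 : A) (k : K), u a1 (u a2 k) = u (a1 * a2) k + h a1 a2 * k := by
    intro a1 a2 k
    have := congrFun (congrArg DFunLike.coe (hcurv a1 a2).1) k
    simp only [LinearMap.sub_apply, LinearMap.coe_comp, Function.comp_apply,
      LinearMap.mulLeft_apply] at this
    exact sub_eq_iff_eq_add'.mp this
  have hv : ∀ (a1 a2 : A) (k : K), v a2 (v a1 k) = v (a1 * a2) k + k * h a1 a2 := by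
    intro a1 a2 k
    have := congrFun (congrArg DFunLike.coe (hcurv a1 a2).2) k
    simp only [LinearMap.sub_apply, LinearMap.coe_comp, Function.comp_apply,
      LinearMap.mulRight_apply] at this
    exact sub_eq_iff_eq_add'.mp this
  constructor
  · intro a1 a2
    constructor
    · ext k
      simp only [u', h', LinearMap.sub_apply, LinearMap.coe_comp, Function.comp_apply,
        LinearMap.add_apply, LinearMap.mulLeft_apply, map_add, map_sub,
        hu, hmul1, hmul2, hmul3, mul_add, add_mul, mul_sub, sub_mul, mul_assoc]
      abel
    · ext k
      simp only [v', h', LinearMap.sub_apply, LinearMap.coe_comp, Function.comp_apply,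
        LinearMap.add_apply, LinearMap.mulRight_apply, map_add, map_sub,
        hv, hmul1, hmul2, hmul3, mul_add, add_mul, mul_sub, sub_mul, mul_assoc]
      abel
  · intro a1 a2 a3
    simp only [u', v', h', LinearMap.add_apply, LinearMap.mulLeft_apply,
      LinearMap.mulRight_apply, map_add, map_sub, map_mul, mul_add, add_mul,
      mul_sub, sub_mul, hu, hv, hreg', hmul1, hmul2, hmul3, mul_assoc]
    abel
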